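/- arXiv:1707.04464 — 2 statements merged into one kernel-verified Lean document; each statement's English description precedes it below -/
import Mathlib

section
/- For a BVGE(α₁, α₂, α₃, λ) random vector (X₁, X₂), P(X₁ = X₂) = α₃/(α₁ + α₂ + α₃); equivalently, the singular component along the diagonal has density f₀(x) = (α₃/(α₁+α₂+α₃)) f_{GE}(x; α₁+α₂+α₃, λ), whose total mass is α₃/(α₁+α₂+α₃). -/
open MeasureTheory ProbabilityTheory

open Set Filter

namespace BVGEAux

noncomputable def F (lam α x : ℝ) : ℝ := (0 ⊔ (1 - Real.exp (-(lam * x)))) ^ α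

lemma F_eq_if {lam α : ℝ} (hlam : 0 < lam) (hα : 0 < α) (x : ℝ) :
    (if 0 < x then (1 - Real.exp (-(lam * x))) ^ α else 0) = F lam α x := by
  unfold F
  split_ifs with h
  · congr 1
    have : Real.exp (-(lam * x)) ≤ 1 := by
      rw [Real.exp_le_one_iff]
      nlinarith
    exact (sup_eq_right.mpr (by linarith)).symm
  · push_neg at h
    have h1 : (1:ℝ) ≤ Real.exp (-(lam * x)) := by
      rw [Real.one_le_exp_iff]
      nlinarith
    rw [sup_eq_left.mpr (by linarith), Real.zero_rpow hα.ne']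

lemma F_cont {lam α : ℝ} (hα : 0 ≤ α) : Continuous (F lam α) := by
  apply Continuous.rpow_const
  · exact continuous_const.max ((continuous_const.sub ((continuous_const.mul continuous_id).neg.rexp)))
  · exact fun x => Or.inr hα

lemma F_nonneg (lam α x : ℝ) : 0 ≤ F lam α x :=
  Real.rpow_nonneg le_sup_left _

lemma F_lt_one {lam α : ℝ} (hα : 0 < α) (x : ℝ) : F lam α x < 1 := by
  apply Real.rpow_lt_one le_sup_left _ hα
  have := Real.exp_pos (-(lam * x))
  simp only [sup_lt_iff]
  constructor <;> linarith

lemma measure_singleton_zero {ν : Measure ℝ} [IsFiniteMeasure ν] {f : ℝ → ℝ}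
    (hf : Continuous f) (h : ∀ x, ν (Iic x) = ENNReal.ofReal (f x)) (a : ℝ) : ν {a} = 0 := by
  have hIio : ν (Iio a) = ENNReal.ofReal (f a) := by
    have hU : (⋃ n : ℕ, Iic (a - 1 / (n + 1))) = Iio a := by
      ext x
      simp only [mem_iUnion, mem_Iic, mem_Iio]
      constructor
      · rintro ⟨n, hn⟩
        have : (0:ℝ) < 1 / (n + 1) := by positivity
        linarith
      · intro hx
        obtain ⟨n, hn⟩ := exists_nat_one_div_lt (sub_pos.mpr hx)
        exact ⟨n, by push_cast at hn ⊢; linarith⟩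
    have hmono : Monotone (fun n : ℕ => Iic (a - 1 / (n + 1 : ℝ))) := by
      intro m n hmn
      apply Iic_subset_Iic.mpr
      have h1 : (1:ℝ) / (n + 1) ≤ 1 / (m + 1) := by
        apply one_div_le_one_div_of_le (by positivity)
        push_cast
        exact_mod_cast add_le_add_left (Nat.cast_le.mpr hmn) 1
      linarith
    have h1 : Tendsto (fun n : ℕ => ν (Iic (a - 1 / (n + 1)))) atTop (nhds (ν (Iio a))) := by
      rw [← hU]
      exact tendsto_measure_iUnion_atTop hmono
    have h2 : Tendsto (fun n : ℕ => ν (Iic (a - 1 / (n + 1)))) atTop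
        (nhds (ENNReal.ofReal (f a))) := by
      simp only [h]
      apply (ENNReal.continuous_ofReal.tendsto _).comp
      apply (hf.tendsto a).comp
      have : Tendsto (fun n : ℕ => a - 1 / (n + 1 : ℝ)) atTop (nhds (a - 0)) :=
        tendsto_const_nhds.sub tendsto_one_div_add_atTop_nhds_zero_nat
      simpa using this
    exact tendsto_nhds_unique h1 h2
  have hs : ({a} : Set ℝ) = Iic a \ Iio a := by
    rw [Iic_sdiff_Iio_same]
  rw [hs, measure_diff Iio_subset_Iic_self measurableSet_Iio.nullMeasurableSet
    (measure_ne_top ν _), hIio, h a, tsub_self]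

lemma measure_le_eq_lintegral {Ω : Type*} [MeasurableSpace Ω] (μ : Measure Ω)
    [IsProbabilityMeasure μ] {X Y : Ω → ℝ} (hX : Measurable X) (hY : Measurable Y)
    (h : IndepFun X Y μ) :
    μ {ω | X ω ≤ Y ω} = ∫⁻ y, μ {ω | X ω ≤ y} ∂(μ.map Y) := by
  have hset : MeasurableSet {p : ℝ × ℝ | p.1 ≤ p.2} :=
    measurableSet_le measurable_fst measurable_snd
  have hmap : μ.map (fun ω => (X ω, Y ω)) = (μ.map X).prod (μ.map Y) :=
    (indepFun_iff_map_prod_eq_prod_map_map hX.aemeasurable hY.aemeasurable).mp h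
  rw [show {ω | X ω ≤ Y ω} = (fun ω => (X ω, Y ω)) ⁻¹' {p : ℝ × ℝ | p.1 ≤ p.2} from rfl,
    ← Measure.map_apply (hX.prodMk hY) hset, hmap, Measure.prod_apply_symm hset]
  apply lintegral_congr
  intro y
  rw [show ((fun x => (x, y)) ⁻¹' {p : ℝ × ℝ | p.1 ≤ p.2}) = Iic y from rfl,
    Measure.map_apply hX measurableSet_Iic]
  rfl

lemma measure_eq_zero' {Ω : Type*} [MeasurableSpace Ω] (μ : Measure Ω)
    [IsProbabilityMeasure μ] {X Y : Ω → ℝ} (hX : Measurable X) (hY : Measurable Y)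
    (h : IndepFun X Y μ) (hatom : ∀ a : ℝ, μ.map Y {a} = 0) :
    μ {ω | X ω = Y ω} = 0 := by
  have hset : MeasurableSet {p : ℝ × ℝ | p.1 = p.2} :=
    measurableSet_eq_fun measurable_fst measurable_snd
  have hmap : μ.map (fun ω => (X ω, Y ω)) = (μ.map X).prod (μ.map Y) :=
    (indepFun_iff_map_prod_eq_prod_map_map hX.aemeasurable hY.aemeasurable).mp h
  rw [show {ω | X ω = Y ω} = (fun ω => (X ω, Y ω)) ⁻¹' {p : ℝ × ℝ | p.1 = p.2} from rfl,
    ← Measure.map_apply (hX.prodMk hY) hset, hmap, Measure.prod_apply hset]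
  have hz : ∀ x : ℝ, (μ.map Y) (Prod.mk x ⁻¹' {p : ℝ × ℝ | p.1 = p.2}) = 0 := by
    intro x
    have : (Prod.mk x ⁻¹' {p : ℝ × ℝ | p.1 = p.2}) = {x} := by
      ext y; simp [eq_comm]
    rw [this]
    exact hatom x
  simp only [hz, lintegral_zero]

end BVGEAux

open BVGEAux

theorem bvge_prob_equal_coordinates
    {Ω : Type*} [MeasurableSpace Ω] (μ : Measure Ω) [IsProbabilityMeasure μ]
    (U₁ U₂ U₃ : Ω → ℝ) (α₁ α₂ α₃ lam : ℝ)
    (hα₁ : 0 < α₁) (hα₂ : 0 < α₂) (hα₃ : 0 < α₃) (hlam : 0 < lam)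
    (hm₁ : Measurable U₁) (hm₂ : Measurable U₂) (hm₃ : Measurable U₃)
    (hindep : iIndepFun (m := fun _ => (inferInstance : MeasurableSpace ℝ)) ![U₁, U₂, U₃] μ)
    (hcdf₁ : ∀ x : ℝ, μ {ω | U₁ ω ≤ x} =
      ENNReal.ofReal (if 0 < x then (1 - Real.exp (-(lam * x))) ^ α₁ else 0))
    (hcdf₂ : ∀ x : ℝ, μ {ω | U₂ ω ≤ x} =
      ENNReal.ofReal (if 0 < x then (1 - Real.exp (-(lam * x))) ^ α₂ else 0))
    (hcdf₃ : ∀ x : ℝ, μ {ω | U₃ ω ≤ x} =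
      ENNReal.ofReal (if 0 < x then (1 - Real.exp (-(lam * x))) ^ α₃ else 0)) :
    μ {ω | max (U₁ ω) (U₃ ω) = max (U₂ ω) (U₃ ω)} =
      ENNReal.ofReal (α₃ / (α₁ + α₂ + α₃)) := by
  classical
  set p : ℝ := α₁ + α₂ with hp_def
  have hp : 0 < p := by positivity
  set γ : ℝ := α₃ / p with hγ_def
  have hγ : 0 < γ := by positivity
  have hmeas : ∀ i, Measurable (![U₁, U₂, U₃] i) := by
    intro i
    fin_cases i <;> simpa using ‹_›
  have h12 : IndepFun U₁ U₂ μ := by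
    have := hindep.indepFun (show (0 : Fin 3) ≠ 1 by decide)
    simpa using this
  have h3 : IndepFun (fun ω => max (U₁ ω) (U₂ ω)) U₃ μ := by
    have h := hindep.indepFun_prodMk hmeas 0 1 2 (by decide) (by decide)
    exact h.comp (measurable_fst.max measurable_snd) measurable_id
  have hc₁ : ∀ x, μ {ω | U₁ ω ≤ x} = ENNReal.ofReal (F lam α₁ x) := fun x => by
    rw [hcdf₁ x, F_eq_if hlam hα₁]
  have hc₂ : ∀ x, μ {ω | U₂ ω ≤ x} = ENNReal.ofReal (F lam α₂ x) := fun x => by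
    rw [hcdf₂ x, F_eq_if hlam hα₂]
  have hc₃ : ∀ x, μ {ω | U₃ ω ≤ x} = ENNReal.ofReal (F lam α₃ x) := fun x => by
    rw [hcdf₃ x, F_eq_if hlam hα₃]
  haveI : IsProbabilityMeasure (μ.map U₃) := Measure.isProbabilityMeasure_map hm₃.aemeasurable
  haveI : IsProbabilityMeasure (μ.map U₂) := Measure.isProbabilityMeasure_map hm₂.aemeasurable
  have hmap₃ : ∀ x, (μ.map U₃) (Iic x) = ENNReal.ofReal (F lam α₃ x) := fun x => by
    rw [Measure.map_apply hm₃ measurableSet_Iic]; exact hc₃ x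
  have hmap₂ : ∀ x, (μ.map U₂) (Iic x) = ENNReal.ofReal (F lam α₂ x) := fun x => by
    rw [Measure.map_apply hm₂ measurableSet_Iic]; exact hc₂ x
  have hatom₂ : ∀ a : ℝ, (μ.map U₂) {a} = 0 :=
    measure_singleton_zero (F_cont hα₂.le) hmap₂
  have hD : μ {ω | U₁ ω = U₂ ω} = 0 := measure_eq_zero' μ hm₁ hm₂ h12 hatom₂
  -- event reduction
  have hAE : μ {ω | max (U₁ ω) (U₃ ω) = max (U₂ ω) (U₃ ω)}
      = μ {ω | max (U₁ ω) (U₂ ω) ≤ U₃ ω} := by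
    apply le_antisymm
    · have hsub : {ω | max (U₁ ω) (U₃ ω) = max (U₂ ω) (U₃ ω)}
          ⊆ {ω | max (U₁ ω) (U₂ ω) ≤ U₃ ω} ∪ {ω | U₁ ω = U₂ ω} := by
        intro ω hω
        simp only [mem_setOf_eq] at hω
        by_cases hA' : max (U₁ ω) (U₂ ω) ≤ U₃ ω
        · exact Or.inl hA'
        · right
          push_neg at hA'
          rcases lt_max_iff.mp hA' with h1 | h2
          · rw [max_eq_left h1.le] at hω
            rcases le_total (U₂ ω) (U₃ ω) with hc | hc
            · rw [max_eq_right hc] at hω; exact absurd hω h1.ne'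
            · rw [max_eq_left hc] at hω; exact hω
          · rw [max_eq_left h2.le] at hω
            rcases le_total (U₁ ω) (U₃ ω) with hc | hc
            · rw [max_eq_right hc] at hω; exact absurd hω.symm h2.ne'
            · rw [max_eq_left hc] at hω; exact hω
      calc μ {ω | max (U₁ ω) (U₃ ω) = max (U₂ ω) (U₃ ω)}
          ≤ μ ({ω | max (U₁ ω) (U₂ ω) ≤ U₃ ω} ∪ {ω | U₁ ω = U₂ ω}) := measure_mono hsub
        _ ≤ μ {ω | max (U₁ ω) (U₂ ω) ≤ U₃ ω} + μ {ω | U₁ ω = U₂ ω} := measure_union_le _ _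
        _ = μ {ω | max (U₁ ω) (U₂ ω) ≤ U₃ ω} := by rw [hD, add_zero]
    · apply measure_mono
      intro ω hω
      simp only [mem_setOf_eq, max_le_iff] at hω ⊢
      rw [max_eq_right hω.1, max_eq_right hω.2]
  rw [hAE]
  -- key computation
  have hμA : μ {ω | max (U₁ ω) (U₂ ω) ≤ U₃ ω}
      = ∫⁻ y, ENNReal.ofReal (F lam p y) ∂(μ.map U₃) := by
    rw [measure_le_eq_lintegral μ (hm₁.max hm₂) hm₃ h3]
    apply lintegral_congr
    intro y
    have hinter : {ω | max (U₁ ω) (U₂ ω) ≤ y} = {ω | U₁ ω ≤ y} ∩ {ω | U₂ ω ≤ y} := by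
      ext ω; simp [max_le_iff]
    rw [hinter,
      show μ ({ω | U₁ ω ≤ y} ∩ {ω | U₂ ω ≤ y}) = μ {ω | U₁ ω ≤ y} * μ {ω | U₂ ω ≤ y} from
        h12.measure_inter_preimage_eq_mul (Iic y) (Iic y) measurableSet_Iic measurableSet_Iic,
      hc₁ y, hc₂ y, ← ENNReal.ofReal_mul (F_nonneg _ _ _)]
    congr 1
    rw [hp_def]
    exact (Real.rpow_add' le_sup_left (by positivity)).symm
  rw [hμA,
    lintegral_eq_lintegral_meas_lt _ (ae_of_all _ fun y => F_nonneg _ _ _)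
      (F_cont hp.le).measurable.aemeasurable]
  -- evaluate the layer-cake integrand
  have hmeaseval : ∀ t ∈ Ioi (0:ℝ), (μ.map U₃) {y | t < F lam p y}
      = (Ioc (0:ℝ) 1).indicator (fun t => ENNReal.ofReal (1 - t ^ γ)) t := by
    intro t ht
    rw [mem_Ioi] at ht
    rcases lt_or_ge t 1 with ht1 | ht1
    · set s : ℝ := t ^ (1/p) with hs_def
      have hs0 : 0 < s := Real.rpow_pos_of_pos ht _
      have hs1 : s < 1 := Real.rpow_lt_one ht.le ht1 (by positivity)
      have h1s : (0:ℝ) < 1 - s := by linarith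
      set c : ℝ := -Real.log (1 - s) / lam with hc_def
      have hts : t = s ^ p := by
        rw [hs_def, ← Real.rpow_mul ht.le, one_div_mul_cancel hp.ne', Real.rpow_one]
      have hiff : ∀ y, t < F lam p y ↔ c < y := by
        intro y
        rw [hts]
        show s ^ p < (0 ⊔ (1 - Real.exp (-(lam * y)))) ^ p ↔ c < y
        rw [Real.rpow_lt_rpow_iff hs0.le le_sup_left hp, lt_sup_iff,
          or_iff_right (not_lt.mpr hs0.le)]
        constructor
        · intro hlt
          have h2 : Real.exp (-(lam * y)) < 1 - s := by linarith
          have h3 : -(lam * y) < Real.log (1 - s) := (Real.lt_log_iff_exp_lt h1s).mpr h2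
          rw [hc_def, div_lt_iff₀ hlam]
          nlinarith [mul_comm lam y]
        · intro hlt
          rw [hc_def, div_lt_iff₀ hlam] at hlt
          have h3 : -(lam * y) < Real.log (1 - s) := by nlinarith [mul_comm lam y]
          have h2 := (Real.lt_log_iff_exp_lt h1s).mp h3
          linarith
      have hset : {y | t < F lam p y} = Ioi c := by
        ext y; simpa using hiff y
      rw [hset, show Ioi c = (Iic c)ᶜ from compl_Iic.symm,
        measure_compl measurableSet_Iic (measure_ne_top _ _), measure_univ, hmap₃ c]
      have hGc : F lam α₃ c = t ^ γ := by
        have hexp : Real.exp (-(lam * c)) = 1 - s := by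
          rw [hc_def, show -(lam * (-Real.log (1 - s) / lam)) = Real.log (1 - s) by
            field_simp]
          exact Real.exp_log h1s
        show (0 ⊔ (1 - Real.exp (-(lam * c)))) ^ α₃ = t ^ γ
        rw [hexp, show (1 - (1 - s)) = s by ring, sup_eq_right.mpr hs0.le, hs_def,
          ← Real.rpow_mul ht.le, show 1 / p * α₃ = γ by rw [hγ_def]; ring]
      rw [hGc, indicator_of_mem (mem_Ioc.mpr ⟨ht, ht1.le⟩),
        ENNReal.ofReal_sub 1 (Real.rpow_nonneg ht.le _), ENNReal.ofReal_one]
    · have hset : {y | t < F lam p y} = ∅ := by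
        ext y
        simp only [mem_setOf_eq, mem_empty_iff_false, iff_false, not_lt]
        exact (F_lt_one hp y).le.trans ht1
      rw [hset, measure_empty]
      rcases eq_or_lt_of_le ht1 with h | h
      · rw [← h, indicator_of_mem (mem_Ioc.mpr ⟨zero_lt_one, le_refl 1⟩)]
        simp [Real.one_rpow]
      · rw [indicator_of_notMem (by simp only [mem_Ioc, not_and, not_le]; intro; linarith)]
  rw [setLIntegral_congr_fun measurableSet_Ioi hmeaseval,
    lintegral_indicator measurableSet_Ioc, Measure.restrict_restrict measurableSet_Ioc,
    inter_eq_left.mpr Ioc_subset_Ioi_self]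
  -- final integral
  have hcont2 : Continuous (fun t : ℝ => t ^ γ) :=
    continuous_id.rpow_const fun x => Or.inr hγ.le
  have hcont : Continuous (fun t : ℝ => 1 - t ^ γ) := continuous_const.sub hcont2
  have hint : Integrable (fun t : ℝ => 1 - t ^ γ) (volume.restrict (Ioc (0:ℝ) 1)) :=
    hcont.integrableOn_Ioc
  have hnn : 0 ≤ᵐ[volume.restrict (Ioc (0:ℝ) 1)] fun t : ℝ => 1 - t ^ γ :=
    (ae_restrict_iff' measurableSet_Ioc).mpr (ae_of_all _ fun t ht =>
      sub_nonneg.mpr (Real.rpow_le_one ht.1.le ht.2 hγ.le))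
  rw [← ofReal_integral_eq_lintegral_ofReal hint hnn]
  congr 1
  rw [← intervalIntegral.integral_of_le zero_le_one,
    intervalIntegral.integral_sub intervalIntegrable_const
      (hcont2.intervalIntegrable 0 1),
    intervalIntegral.integral_const, integral_rpow (Or.inl (by linarith)),
    Real.one_rpow, Real.zero_rpow (by positivity : γ + 1 ≠ 0)]
  rw [hγ_def, hp_def]
  have h1 : α₁ + α₂ ≠ 0 := by positivity
  have h2 : α₁ + α₂ + α₃ ≠ 0 := by positivity
  have h3 : α₃ / (α₁ + α₂) + 1 ≠ 0 := by positivity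
  have h4 : α₃ + (α₁ + α₂) ≠ 0 := by positivity
  rw [smul_eq_mul, show ((1:ℝ) - 0) = 1 by norm_num, mul_one, div_add_one h1, one_div_div,
    one_sub_div h4, show α₃ + (α₁ + α₂) - (α₁ + α₂) = α₃ by ring,
    show α₃ + (α₁ + α₂) = α₁ + α₂ + α₃ by ring]
end

section
/- For the BVGE distribution defined by X₁ = max(U₁, U₃), X₂ = max(U₂, U₃) with Uᵢ ~ GE(αᵢ, λ) independent, the conditional probability that U₁ > U₃ given X₁ < X₂ equals α₁/(α₁ + α₃), and the conditional probability that U₁ < U₃ given X₁ < X₂ equals α₃/(α₁ + α₃). -/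
open MeasureTheory ProbabilityTheory Set Filter Topology

namespace BVGEAux

noncomputable def Hf (lam c : ℝ) : ℝ → ℝ := fun x =>
  if 0 < x then (1 - Real.exp (-(lam * x))) ^ c else 0

lemma G_pos {lam x : ℝ} (hlam : 0 < lam) (hx : 0 < x) :
    0 < 1 - Real.exp (-(lam * x)) := by
  have h : Real.exp (-(lam * x)) < 1 := by
    rw [Real.exp_lt_one_iff]; nlinarith
  linarith

lemma G_lt_one {lam x : ℝ} : 1 - Real.exp (-(lam * x)) < 1 := by
  have := Real.exp_pos (-(lam * x)); linarith

lemma Hf_nonneg {lam c : ℝ} (hlam : 0 < lam) (x : ℝ) : 0 ≤ Hf lam c x := by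
  unfold Hf
  split
  · exact Real.rpow_nonneg (G_pos hlam (by assumption)).le _
  · exact le_refl 0

lemma Hf_le_one {lam c : ℝ} (hlam : 0 < lam) (hc : 0 ≤ c) (x : ℝ) : Hf lam c x ≤ 1 := by
  unfold Hf
  split
  · exact Real.rpow_le_one (G_pos hlam (by assumption)).le G_lt_one.le hc
  · exact zero_le_one

lemma Hf_lt_one {lam c : ℝ} (hlam : 0 < lam) (hc : 0 < c) (x : ℝ) : Hf lam c x < 1 := by
  unfold Hf
  split
  · exact Real.rpow_lt_one (G_pos hlam (by assumption)).le G_lt_one hc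
  · exact zero_lt_one

lemma Hf_mul {lam : ℝ} (hlam : 0 < lam) (b c x : ℝ) :
    Hf lam b x * Hf lam c x = Hf lam (b + c) x := by
  unfold Hf
  split
  · exact (Real.rpow_add (G_pos hlam (by assumption)) b c).symm
  · ring

lemma Hf_continuous {lam c : ℝ} (hlam : 0 < lam) (hc : 0 < c) :
    Continuous (Hf lam c) := by
  have heq : Hf lam c = fun x => (max (1 - Real.exp (-(lam * x))) 0) ^ c := by
    funext x
    unfold Hf
    split
    · rw [max_eq_left (G_pos hlam (by assumption)).le]
    · rename_i hx
      have hx' : x ≤ 0 := le_of_not_gt hx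
      have : Real.exp (-(lam * x)) ≥ 1 := by
        rw [← Real.exp_zero]
        apply Real.exp_le_exp.mpr
        nlinarith
      rw [max_eq_right (by linarith), Real.zero_rpow hc.ne']
  rw [heq]
  exact (Real.continuous_rpow_const hc.le).comp
    ((continuous_const.sub ((Real.continuous_exp.comp (continuous_const.mul continuous_id).neg))).max continuous_const)

lemma Hf_measurable {lam c : ℝ} (hlam : 0 < lam) (hc : 0 < c) :
    Measurable (Hf lam c) := (Hf_continuous hlam hc).measurable

section CDF

variable {lam a : ℝ} (ν : Measure ℝ) [IsProbabilityMeasure ν]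

lemma meas_singleton (hlam : 0 < lam) (ha : 0 < a)
    (hcdf : ∀ x, ν (Iic x) = ENNReal.ofReal (Hf lam a x)) (y : ℝ) : ν {y} = 0 := by
  set F := Hf lam a with hF
  have hcont : Continuous F := Hf_continuous hlam ha
  have hseq : Tendsto (fun n : ℕ => ν (Ioc (y - 1/(n+1)) y)) atTop
      (𝓝 (ν (⋂ n : ℕ, Ioc (y - 1/(n+1)) y))) := by
    apply tendsto_measure_iInter_atTop
      (fun n => measurableSet_Ioc.nullMeasurableSet) ?_ ⟨0, measure_ne_top _ _⟩
    intro m n hmn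
    apply Ioc_subset_Ioc_left
    have h1 : (1:ℝ)/(n+1) ≤ 1/(m+1) := by
      apply one_div_le_one_div_of_le (by positivity)
      have : (m:ℝ) ≤ n := Nat.cast_le.mpr hmn
      linarith
    linarith
  have hInter : (⋂ n : ℕ, Ioc (y - 1/(n+1)) y) = {y} := by
    ext z
    simp only [mem_iInter, mem_Ioc, mem_singleton_iff]
    constructor
    · intro h
      have hz : z ≤ y := (h 0).2
      rcases eq_or_lt_of_le hz with h' | h'
      · exact h'
      · exfalso
        obtain ⟨n, hn⟩ := exists_nat_one_div_lt (sub_pos.2 h')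
        have := (h n).1
        have : y - 1/(n+1) < z := this
        linarith
    · rintro rfl
      intro n
      constructor
      · have : (0:ℝ) < 1/(n+1) := by positivity
        linarith
      · exact le_rfl
  have hval : ∀ n : ℕ, ν (Ioc (y - 1/(n+1)) y)
      = ENNReal.ofReal (F y) - ENNReal.ofReal (F (y - 1/(n+1))) := by
    intro n
    rw [← Set.Iic_sdiff_Iic,
      measure_diff (Iic_subset_Iic.2 (by
        have : (0:ℝ) < 1/(n+1) := by positivity
        linarith)) measurableSet_Iic.nullMeasurableSet
        (measure_ne_top ν _), hcdf, hcdf]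
  have hlim : Tendsto (fun n : ℕ => ENNReal.ofReal (F y) - ENNReal.ofReal (F (y - 1/(n+1))))
      atTop (𝓝 0) := by
    have h1 : Tendsto (fun n : ℕ => y - 1/(n+1 : ℝ)) atTop (𝓝 y) := by
      have h0 := tendsto_one_div_add_atTop_nhds_zero_nat (𝕜 := ℝ)
      have := tendsto_const_nhds (x := y) (f := atTop (α := ℕ)) |>.sub h0
      simpa using this
    have h2 : Tendsto (fun n : ℕ => ENNReal.ofReal (F (y - 1/(n+1)))) atTop
        (𝓝 (ENNReal.ofReal (F y))) :=
      (ENNReal.continuous_ofReal.tendsto _).comp ((hcont.tendsto y).comp h1)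
    have h3 := ENNReal.Tendsto.sub (tendsto_const_nhds (x := ENNReal.ofReal (F y))) h2
      (Or.inl ENNReal.ofReal_ne_top)
    simpa using h3
  rw [← hInter]
  have hseq' : Tendsto (fun n : ℕ => ν (Ioc (y - 1/(n+1)) y)) atTop (𝓝 0) := by
    rw [show (fun n : ℕ => ν (Ioc (y - 1/(n+1)) y))
      = fun n : ℕ => ENNReal.ofReal (F y) - ENNReal.ofReal (F (y - 1/(n+1))) from funext hval]
    exact hlim
  exact tendsto_nhds_unique hseq hseq'

lemma meas_Iio (hlam : 0 < lam) (ha : 0 < a)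
    (hcdf : ∀ x, ν (Iic x) = ENNReal.ofReal (Hf lam a x)) (y : ℝ) :
    ν (Iio y) = ENNReal.ofReal (Hf lam a y) := by
  have h1 : ν (Iic y) ≤ ν (Iio y) := by
    rw [← Set.Iio_union_right]
    calc ν (Iio y ∪ {y}) ≤ ν (Iio y) + ν {y} := measure_union_le _ _
    _ = ν (Iio y) := by rw [meas_singleton ν hlam ha hcdf y, add_zero]
  have h2 : ν (Iio y) ≤ ν (Iic y) := measure_mono Iio_subset_Iic_self
  rw [← hcdf]
  exact le_antisymm h2 h1

lemma meas_Ioi (hlam : 0 < lam) (ha : 0 < a)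
    (hcdf : ∀ x, ν (Iic x) = ENNReal.ofReal (Hf lam a x)) (y : ℝ) :
    ν (Ioi y) = ENNReal.ofReal (1 - Hf lam a y) := by
  have := measure_compl (measurableSet_Iic (a := y)) (measure_ne_top ν _)
  rw [Set.compl_Iic] at this
  rw [this, measure_univ, hcdf, ENNReal.ofReal_sub _ (Hf_nonneg hlam y), ENNReal.ofReal_one]

lemma lint1 {b : ℝ} (hlam : 0 < lam) (ha : 0 < a) (hb : 0 < b)
    (hcdf : ∀ x, ν (Iic x) = ENNReal.ofReal (Hf lam a x)) :
    ∫⁻ x, ENNReal.ofReal (Hf lam b x) ∂ν = ENNReal.ofReal (a / (a + b)) := by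
  rw [lintegral_eq_lintegral_meas_lt ν (Eventually.of_forall (Hf_nonneg hlam))
    (Hf_measurable hlam hb).aemeasurable]
  have hc' : (0:ℝ) < a / b := div_pos ha hb
  have key : ∀ t ∈ Ioi (0:ℝ), ν {x | t < Hf lam b x}
      = ENNReal.ofReal (1 - (min t 1) ^ (a / b)) := by
    intro t ht
    rw [mem_Ioi] at ht
    by_cases h1 : 1 ≤ t
    · have hempty : {x | t < Hf lam b x} = ∅ := by
        apply eq_empty_iff_forall_notMem.2
        intro x hx
        have := Hf_lt_one hlam hb x
        simp only [mem_setOf_eq] at hx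
        linarith
      rw [hempty, measure_empty, min_eq_right h1, Real.one_rpow]
      simp
    · push_neg at h1
      set s := t ^ b⁻¹ with hs
      have hs0 : 0 < s := Real.rpow_pos_of_pos ht _
      have hs1 : s < 1 := Real.rpow_lt_one ht.le h1 (by positivity)
      set cp := -Real.log (1 - s) / lam with hcp
      have hc0 : 0 < cp := by
        apply div_pos _ hlam
        have := Real.log_neg (x := 1 - s) (by linarith) (by linarith)
        linarith
      have hGc : 1 - Real.exp (-(lam * cp)) = s := by
        have hl : lam * cp = -Real.log (1 - s) := by
          rw [hcp]
          field_simp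
        rw [hl, neg_neg, Real.exp_log (by linarith)]
        ring
      have hset : {x | t < Hf lam b x} = Ioi cp := by
        ext x
        simp only [mem_setOf_eq, mem_Ioi]
        unfold Hf
        constructor
        · intro hx
          split at hx
          · rename_i hx0
            have hsx : s < 1 - Real.exp (-(lam * x)) :=
              (Real.rpow_inv_lt_iff_of_pos ht.le (G_pos hlam hx0).le hb).mpr hx
            rw [← hGc] at hsx
            have hexp : Real.exp (-(lam * x)) < Real.exp (-(lam * cp)) := by linarith
            have := Real.exp_lt_exp.mp hexp
            nlinarith
          · linarith
        · intro hx
          have hx0 : 0 < x := lt_trans hc0 hx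
          rw [if_pos hx0]
          apply (Real.rpow_inv_lt_iff_of_pos ht.le (G_pos hlam hx0).le hb).mp
          have hexp : Real.exp (-(lam * x)) < Real.exp (-(lam * cp)) := by
            apply Real.exp_lt_exp.mpr
            nlinarith
          rw [← hs]
          rw [← hGc]
          linarith
      rw [hset, meas_Ioi ν hlam ha hcdf cp]
      congr 1
      have hHc : Hf lam a cp = s ^ a := by
        unfold Hf
        rw [if_pos hc0, hGc]
      rw [hHc, min_eq_left h1.le, hs, ← Real.rpow_mul ht.le]
      rw [show b⁻¹ * a = a / b by field_simp]
  rw [setLIntegral_congr_fun measurableSet_Ioi key]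
  have hsplit : Ioc (0:ℝ) 1 ∪ Ioi 1 = Ioi 0 := Ioc_union_Ioi_eq_Ioi zero_le_one
  rw [← hsplit, lintegral_union measurableSet_Ioi (Ioc_disjoint_Ioi le_rfl)]
  have h2 : ∫⁻ t in Ioi (1:ℝ), ENNReal.ofReal (1 - (min t 1) ^ (a / b)) = 0 := by
    rw [setLIntegral_congr_fun measurableSet_Ioi
      (fun t ht => by
        rw [min_eq_right (le_of_lt ht), Real.one_rpow, sub_self, ENNReal.ofReal_zero])]
    simp
  rw [h2, add_zero]
  have h3 : ∫⁻ t in Ioc (0:ℝ) 1, ENNReal.ofReal (1 - (min t 1) ^ (a / b))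
      = ∫⁻ t in Ioc (0:ℝ) 1, ENNReal.ofReal (1 - t ^ (a / b)) := by
    apply setLIntegral_congr_fun measurableSet_Ioc
    exact (fun t ht => by rw [min_eq_left ht.2])
  rw [h3]
  have hint : IntegrableOn (fun t : ℝ => 1 - t ^ (a / b)) (Ioc 0 1) volume := by
    have := (intervalIntegrable_const (c := (1:ℝ)) (μ := volume) (a := 0) (b := 1)).sub
      (intervalIntegral.intervalIntegrable_rpow' (by linarith : (-1:ℝ) < a / b))
    exact this.1
  rw [← ofReal_integral_eq_lintegral_ofReal hint
    ((ae_restrict_iff' measurableSet_Ioc).2 (Eventually.of_forall (fun t ht => by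
      have h := Real.rpow_le_one ht.1.le ht.2 hc'.le
      show (0:ℝ) ≤ 1 - t ^ (a / b)
      linarith)))]
  congr 1
  rw [← intervalIntegral.integral_of_le zero_le_one,
    intervalIntegral.integral_sub intervalIntegrable_const
      (intervalIntegral.intervalIntegrable_rpow' (by linarith)),
    intervalIntegral.integral_const, integral_rpow (Or.inl (by linarith : (-1:ℝ) < a / b))]
  rw [Real.one_rpow, Real.zero_rpow (by positivity : a / b + 1 ≠ 0)]
  have hab : a + b ≠ 0 := by positivity
  have hb' : b ≠ 0 := hb.ne'
  have habd : a / b + 1 ≠ 0 := by positivity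
  field_simp
  simp only [sub_zero, smul_eq_mul]; ring

lemma lint2 {b c : ℝ} (hlam : 0 < lam) (ha : 0 < a) (hb : 0 < b) (hc : 0 < c)
    (hcdf : ∀ x, ν (Iic x) = ENNReal.ofReal (Hf lam a x)) :
    ∫⁻ x, ENNReal.ofReal (Hf lam b x * (1 - Hf lam c x)) ∂ν
      = ENNReal.ofReal (a / (a + b) - a / (a + b + c)) := by
  have hpt : ∀ x, ENNReal.ofReal (Hf lam b x * (1 - Hf lam c x))
      + ENNReal.ofReal (Hf lam (b + c) x) = ENNReal.ofReal (Hf lam b x) := by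
    intro x
    rw [← ENNReal.ofReal_add
      (mul_nonneg (Hf_nonneg hlam x) (by linarith [Hf_le_one hlam hc.le x]))
      (Hf_nonneg hlam x)]
    congr 1
    rw [← Hf_mul hlam b c x]
    ring
  have hadd : ∫⁻ x, ENNReal.ofReal (Hf lam b x * (1 - Hf lam c x)) ∂ν
      + ∫⁻ x, ENNReal.ofReal (Hf lam (b + c) x) ∂ν
      = ∫⁻ x, ENNReal.ofReal (Hf lam b x) ∂ν := by
    rw [← lintegral_add_right _ ((Hf_measurable hlam (by positivity)).ennreal_ofReal)]
    exact lintegral_congr (fun x => hpt x)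
  rw [lint1 ν hlam ha hb hcdf, lint1 ν hlam ha (by positivity) hcdf] at hadd
  rw [ENNReal.eq_sub_of_add_eq ENNReal.ofReal_ne_top hadd,
    ← ENNReal.ofReal_sub _ (by positivity : (0:ℝ) ≤ a / (a + (b + c)))]
  congr 2
  rw [add_assoc]

end CDF

section Slice

variable {Ω : Type*} [MeasurableSpace Ω] (μ : Measure Ω) [IsProbabilityMeasure μ]
  {X Y Z : Ω → ℝ}

lemma slice1 (hX : Measurable X) (hY : Measurable Y) (hZ : Measurable Z)
    (hind : IndepFun X (fun ω => (Y ω, Z ω)) μ)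
    (hindYZ : IndepFun Y Z μ) :
    μ {ω | Y ω < X ω ∧ Z ω < X ω}
      = ∫⁻ x, (μ.map Y) (Iio x) * (μ.map Z) (Iio x) ∂(μ.map X) := by
  haveI : IsProbabilityMeasure (μ.map Y) := Measure.isProbabilityMeasure_map hY.aemeasurable
  haveI : IsProbabilityMeasure (μ.map Z) := Measure.isProbabilityMeasure_map hZ.aemeasurable
  haveI : IsProbabilityMeasure (μ.map (fun ω => (Y ω, Z ω))) :=
    Measure.isProbabilityMeasure_map (hY.prodMk hZ).aemeasurable
  have hmapYZ : μ.map (fun ω => (Y ω, Z ω)) = (μ.map Y).prod (μ.map Z) :=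
    (indepFun_iff_map_prod_eq_prod_map_map hY.aemeasurable hZ.aemeasurable).mp hindYZ
  have hmap : μ.map (fun ω => (X ω, (Y ω, Z ω)))
      = (μ.map X).prod (μ.map (fun ω => (Y ω, Z ω))) :=
    (indepFun_iff_map_prod_eq_prod_map_map hX.aemeasurable
      (hY.prodMk hZ).aemeasurable).mp hind
  have hSm : MeasurableSet {p : ℝ × ℝ × ℝ | p.2.1 < p.1 ∧ p.2.2 < p.1} :=
    (measurableSet_lt (measurable_fst.comp measurable_snd) measurable_fst).inter
      (measurableSet_lt (measurable_snd.comp measurable_snd) measurable_fst)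
  have h1 : μ {ω | Y ω < X ω ∧ Z ω < X ω}
      = μ.map (fun ω => (X ω, (Y ω, Z ω))) {p : ℝ × ℝ × ℝ | p.2.1 < p.1 ∧ p.2.2 < p.1} := by
    rw [Measure.map_apply (hX.prodMk (hY.prodMk hZ)) hSm]
    rfl
  rw [h1, hmap, hmapYZ, Measure.prod_apply hSm]
  apply lintegral_congr
  intro x
  have hpre : (Prod.mk x ⁻¹' {p : ℝ × ℝ × ℝ | p.2.1 < p.1 ∧ p.2.2 < p.1})
      = Iio x ×ˢ Iio x := by
    ext q; simp [Set.mem_prod]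
  rw [hpre, Measure.prod_prod]

lemma slice2 (hX : Measurable X) (hY : Measurable Y) (hZ : Measurable Z)
    (hind : IndepFun X (fun ω => (Y ω, Z ω)) μ)
    (hindYZ : IndepFun Y Z μ) :
    μ {ω | Y ω < X ω ∧ X ω < Z ω}
      = ∫⁻ x, (μ.map Y) (Iio x) * (μ.map Z) (Ioi x) ∂(μ.map X) := by
  haveI : IsProbabilityMeasure (μ.map Y) := Measure.isProbabilityMeasure_map hY.aemeasurable
  haveI : IsProbabilityMeasure (μ.map Z) := Measure.isProbabilityMeasure_map hZ.aemeasurable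
  haveI : IsProbabilityMeasure (μ.map (fun ω => (Y ω, Z ω))) :=
    Measure.isProbabilityMeasure_map (hY.prodMk hZ).aemeasurable
  have hmapYZ : μ.map (fun ω => (Y ω, Z ω)) = (μ.map Y).prod (μ.map Z) :=
    (indepFun_iff_map_prod_eq_prod_map_map hY.aemeasurable hZ.aemeasurable).mp hindYZ
  have hmap : μ.map (fun ω => (X ω, (Y ω, Z ω)))
      = (μ.map X).prod (μ.map (fun ω => (Y ω, Z ω))) :=
    (indepFun_iff_map_prod_eq_prod_map_map hX.aemeasurable
      (hY.prodMk hZ).aemeasurable).mp hind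
  have hSm : MeasurableSet {p : ℝ × ℝ × ℝ | p.2.1 < p.1 ∧ p.1 < p.2.2} :=
    (measurableSet_lt (measurable_fst.comp measurable_snd) measurable_fst).inter
      (measurableSet_lt measurable_fst (measurable_snd.comp measurable_snd))
  have h1 : μ {ω | Y ω < X ω ∧ X ω < Z ω}
      = μ.map (fun ω => (X ω, (Y ω, Z ω))) {p : ℝ × ℝ × ℝ | p.2.1 < p.1 ∧ p.1 < p.2.2} := by
    rw [Measure.map_apply (hX.prodMk (hY.prodMk hZ)) hSm]
    rfl
  rw [h1, hmap, hmapYZ, Measure.prod_apply hSm]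
  apply lintegral_congr
  intro x
  have hpre : (Prod.mk x ⁻¹' {p : ℝ × ℝ × ℝ | p.2.1 < p.1 ∧ p.1 < p.2.2})
      = Iio x ×ˢ Ioi x := by
    ext q; simp [Set.mem_prod]
  rw [hpre, Measure.prod_prod]

end Slice

end BVGEAux


open BVGEAux

open MeasureTheory ProbabilityTheory

theorem bvge_fractional_masses
    {Ω : Type*} [MeasurableSpace Ω] (μ : Measure Ω) [IsProbabilityMeasure μ]
    (U₁ U₂ U₃ : Ω → ℝ) (α₁ α₂ α₃ lam : ℝ)
    (hα₁ : 0 < α₁) (hα₂ : 0 < α₂) (hα₃ : 0 < α₃) (hlam : 0 < lam)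
    (hm₁ : Measurable U₁) (hm₂ : Measurable U₂) (hm₃ : Measurable U₃)
    (hindep : iIndepFun ![U₁, U₂, U₃] μ)
    (hcdf₁ : ∀ x : ℝ, μ {ω | U₁ ω ≤ x} =
      ENNReal.ofReal (if 0 < x then (1 - Real.exp (-(lam * x))) ^ α₁ else 0))
    (hcdf₂ : ∀ x : ℝ, μ {ω | U₂ ω ≤ x} =
      ENNReal.ofReal (if 0 < x then (1 - Real.exp (-(lam * x))) ^ α₂ else 0))
    (hcdf₃ : ∀ x : ℝ, μ {ω | U₃ ω ≤ x} =
      ENNReal.ofReal (if 0 < x then (1 - Real.exp (-(lam * x))) ^ α₃ else 0)) :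
    μ {ω | U₃ ω < U₁ ω ∧ max (U₁ ω) (U₃ ω) < max (U₂ ω) (U₃ ω)} =
      ENNReal.ofReal (α₁ / (α₁ + α₃)) *
        μ {ω | max (U₁ ω) (U₃ ω) < max (U₂ ω) (U₃ ω)} ∧
    μ {ω | U₁ ω < U₃ ω ∧ max (U₁ ω) (U₃ ω) < max (U₂ ω) (U₃ ω)} =
      ENNReal.ofReal (α₃ / (α₁ + α₃)) *
        μ {ω | max (U₁ ω) (U₃ ω) < max (U₂ ω) (U₃ ω)} := by
  have hmeas : ∀ i, Measurable (![U₁, U₂, U₃] i) := by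
    intro i
    fin_cases i
    · exact hm₁
    · exact hm₂
    · exact hm₃
  -- independence facts
  have hind13 : IndepFun U₁ U₃ μ := by
    have := hindep.indepFun (show (0 : Fin 3) ≠ 2 by decide)
    simpa using this
  have hind32 : IndepFun U₃ U₂ μ := by
    have := hindep.indepFun (show (2 : Fin 3) ≠ 1 by decide)
    simpa using this
  have hind12 : IndepFun U₁ U₂ μ := by
    have := hindep.indepFun (show (0 : Fin 3) ≠ 1 by decide)
    simpa using this
  have hindP2 : IndepFun U₂ (fun ω => (U₁ ω, U₃ ω)) μ := by
    have := (hindep.indepFun_prodMk hmeas 0 2 1 (by decide) (by decide)).symm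
    simpa using this
  have hindP1 : IndepFun U₁ (fun ω => (U₃ ω, U₂ ω)) μ := by
    have := (hindep.indepFun_prodMk hmeas 2 1 0 (by decide) (by decide)).symm
    simpa using this
  have hindP3 : IndepFun U₃ (fun ω => (U₁ ω, U₂ ω)) μ := by
    have := (hindep.indepFun_prodMk hmeas 0 1 2 (by decide) (by decide)).symm
    simpa using this
  -- CDFs of the pushforward measures
  haveI iP1 : IsProbabilityMeasure (μ.map U₁) := Measure.isProbabilityMeasure_map hm₁.aemeasurable
  haveI iP2 : IsProbabilityMeasure (μ.map U₂) := Measure.isProbabilityMeasure_map hm₂.aemeasurable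
  haveI iP3 : IsProbabilityMeasure (μ.map U₃) := Measure.isProbabilityMeasure_map hm₃.aemeasurable
  have hcdfm₁ : ∀ x, (μ.map U₁) (Set.Iic x) = ENNReal.ofReal (Hf lam α₁ x) := by
    intro x
    rw [Measure.map_apply hm₁ measurableSet_Iic]
    exact hcdf₁ x
  have hcdfm₂ : ∀ x, (μ.map U₂) (Set.Iic x) = ENNReal.ofReal (Hf lam α₂ x) := by
    intro x
    rw [Measure.map_apply hm₂ measurableSet_Iic]
    exact hcdf₂ x
  have hcdfm₃ : ∀ x, (μ.map U₃) (Set.Iic x) = ENNReal.ofReal (Hf lam α₃ x) := by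
    intro x
    rw [Measure.map_apply hm₃ measurableSet_Iic]
    exact hcdf₃ x
  -- rewriting the events
  have hmaxeq : ∀ ω, (max (U₁ ω) (U₃ ω) < max (U₂ ω) (U₃ ω))
      ↔ (U₁ ω < U₂ ω ∧ U₃ ω < U₂ ω) := by
    intro ω
    constructor
    · intro h
      have h3 : U₃ ω < max (U₂ ω) (U₃ ω) := lt_of_le_of_lt (le_max_right _ _) h
      have h2 : max (U₂ ω) (U₃ ω) = U₂ ω := by
        rcases le_total (U₂ ω) (U₃ ω) with hc | hc
        · rw [max_eq_right hc] at h3; exact absurd h3 (lt_irrefl _)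
        · exact max_eq_left hc
      rw [h2] at h
      exact max_lt_iff.mp h
    · rintro ⟨h1, h3⟩
      exact lt_of_lt_of_le (max_lt h1 h3) (le_max_left _ _)
  have hBset : {ω | max (U₁ ω) (U₃ ω) < max (U₂ ω) (U₃ ω)}
      = {ω | U₁ ω < U₂ ω ∧ U₃ ω < U₂ ω} := Set.ext fun ω => hmaxeq ω
  have hA1set : {ω | U₃ ω < U₁ ω ∧ max (U₁ ω) (U₃ ω) < max (U₂ ω) (U₃ ω)}
      = {ω | U₃ ω < U₁ ω ∧ U₁ ω < U₂ ω} := by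
    ext ω
    simp only [Set.mem_setOf_eq, hmaxeq ω]
    constructor
    · rintro ⟨a, b, c⟩; exact ⟨a, b⟩
    · rintro ⟨a, b⟩; exact ⟨a, b, lt_trans a b⟩
  have hA2set : {ω | U₁ ω < U₃ ω ∧ max (U₁ ω) (U₃ ω) < max (U₂ ω) (U₃ ω)}
      = {ω | U₁ ω < U₃ ω ∧ U₃ ω < U₂ ω} := by
    ext ω
    simp only [Set.mem_setOf_eq, hmaxeq ω]
    constructor
    · rintro ⟨a, b, c⟩; exact ⟨a, c⟩
    · rintro ⟨a, c⟩; exact ⟨a, lt_trans a c, c⟩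
  -- the three probabilities
  have hbase : μ {ω | U₁ ω < U₂ ω ∧ U₃ ω < U₂ ω}
      = ENNReal.ofReal (α₂ / (α₂ + (α₁ + α₃))) := by
    rw [slice1 μ hm₂ hm₁ hm₃ hindP2 hind13]
    have hptw : ∀ x, (μ.map U₁) (Set.Iio x) * (μ.map U₃) (Set.Iio x)
        = ENNReal.ofReal (Hf lam (α₁ + α₃) x) := by
      intro x
      rw [meas_Iio _ hlam hα₁ hcdfm₁ x, meas_Iio _ hlam hα₃ hcdfm₃ x,
        ← ENNReal.ofReal_mul (Hf_nonneg hlam x), Hf_mul hlam]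
    rw [lintegral_congr hptw]
    exact lint1 (μ.map U₂) hlam hα₂ (by positivity) hcdfm₂
  have hA1v : μ {ω | U₃ ω < U₁ ω ∧ U₁ ω < U₂ ω}
      = ENNReal.ofReal (α₁ / (α₁ + α₃) - α₁ / (α₁ + α₃ + α₂)) := by
    rw [slice2 μ hm₁ hm₃ hm₂ hindP1 hind32]
    have hptw : ∀ x, (μ.map U₃) (Set.Iio x) * (μ.map U₂) (Set.Ioi x)
        = ENNReal.ofReal (Hf lam α₃ x * (1 - Hf lam α₂ x)) := by
      intro x
      rw [meas_Iio _ hlam hα₃ hcdfm₃ x, meas_Ioi _ hlam hα₂ hcdfm₂ x,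
        ← ENNReal.ofReal_mul (Hf_nonneg hlam x)]
    rw [lintegral_congr hptw]
    exact lint2 (μ.map U₁) hlam hα₁ hα₃ hα₂ hcdfm₁
  have hA2v : μ {ω | U₁ ω < U₃ ω ∧ U₃ ω < U₂ ω}
      = ENNReal.ofReal (α₃ / (α₃ + α₁) - α₃ / (α₃ + α₁ + α₂)) := by
    rw [slice2 μ hm₃ hm₁ hm₂ hindP3 hind12]
    have hptw : ∀ x, (μ.map U₁) (Set.Iio x) * (μ.map U₂) (Set.Ioi x)
        = ENNReal.ofReal (Hf lam α₁ x * (1 - Hf lam α₂ x)) := by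
      intro x
      rw [meas_Iio _ hlam hα₁ hcdfm₁ x, meas_Ioi _ hlam hα₂ hcdfm₂ x,
        ← ENNReal.ofReal_mul (Hf_nonneg hlam x)]
    rw [lintegral_congr hptw]
    exact lint2 (μ.map U₃) hlam hα₃ hα₁ hα₂ hcdfm₃
  have h13 : α₁ + α₃ ≠ 0 := by positivity
  have h132 : α₁ + α₃ + α₂ ≠ 0 := by positivity
  have h213 : α₂ + (α₁ + α₃) ≠ 0 := by positivity
  constructor
  · rw [hA1set, hBset, hA1v, hbase,
      ← ENNReal.ofReal_mul (by positivity : (0:ℝ) ≤ α₁ / (α₁ + α₃))]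
    congr 1
    field_simp
    ring
  · rw [hA2set, hBset, hA2v, hbase,
      ← ENNReal.ofReal_mul (by positivity : (0:ℝ) ≤ α₃ / (α₁ + α₃))]
    congr 1
    field_simp
    ring
end
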